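/- Let $\{x_j\}_{j=0}^{d} \subset [0,1]$ be a $\delta$-separated set of $d+1$ points (i.e., $|x_i - x_j| \geq \delta$ for $i \neq j$). Then for any polynomial $p$ of degree at most $d$ and any real $L \geq 1$, we have $|p(L)| \leq (e^2 (\delta d)^{-1} L)^d \max_{0 \leq j \leq d} |p(x_j)|$. -/

import Mathlib

open Real Polynomial

lemma aux_fact (n : ℕ) : (n : ℝ) ^ n ≤ Real.exp 1 ^ n * (n.factorial : ℝ) := by
  induction n with
  | zero => simp
  | succ n ih =>
    rcases Nat.eq_zero_or_pos n with h | h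
    · subst h
      simp [Nat.factorial]
    · have hn : (0:ℝ) < n := by exact_mod_cast h
      have h1 : ((n+1 : ℕ) : ℝ) ^ n ≤ Real.exp 1 * (n:ℝ) ^ n := by
        have e1 : (1/(n:ℝ)) * n = 1 := by field_simp
        have h2 := Real.add_one_le_exp (1/(n:ℝ))
        have h3 : ((n+1:ℕ):ℝ) ≤ Real.exp (1/n) * n := by
          push_cast
          nlinarith [mul_le_mul_of_nonneg_right h2 hn.le]
        calc ((n+1:ℕ):ℝ) ^ n ≤ (Real.exp (1/n) * n) ^ n := by
              apply pow_le_pow_left₀ (by positivity) h3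
          _ = Real.exp (1/n) ^ n * (n:ℝ)^n := mul_pow _ _ _
          _ = Real.exp 1 * (n:ℝ)^n := by
              rw [← Real.exp_nat_mul]
              congr 1
              field_simp
      have key : ((n+1:ℕ):ℝ) ^ (n+1) ≤ ((n+1:ℕ):ℝ) * (Real.exp 1 * (n:ℝ)^n) := by
        rw [pow_succ, mul_comm]
        exact mul_le_mul_of_nonneg_left h1 (Nat.cast_nonneg _)
      calc ((n+1:ℕ):ℝ) ^ (n+1) ≤ ((n+1:ℕ):ℝ) * (Real.exp 1 * (n:ℝ)^n) := key
        _ ≤ ((n+1:ℕ):ℝ) * (Real.exp 1 * (Real.exp 1 ^ n * (n.factorial : ℝ))) := by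
            apply mul_le_mul_of_nonneg_left _ (Nat.cast_nonneg _)
            exact mul_le_mul_of_nonneg_left ih (Real.exp_pos 1).le
        _ = Real.exp 1 ^ (n+1) * ((n+1).factorial : ℝ) := by
            rw [Nat.factorial_succ]
            push_cast
            ring

lemma aux_prod_dist (d : ℕ) (m : Fin (d+1)) :
    ∏ k ∈ Finset.univ.erase m, (if (k:ℕ) < (m:ℕ) then (m:ℕ) - (k:ℕ) else (k:ℕ) - (m:ℕ))
      = (m:ℕ).factorial * (d - (m:ℕ)).factorial := by
  have hmap : ((Finset.univ.erase m).map Fin.valEmbedding)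
      = (Finset.range (d+1)).erase (m:ℕ) := by
    rw [Finset.map_erase, Fin.map_valEmbedding_univ]
    rw [Nat.Iio_eq_range]; rfl
  have h1 : ∏ k ∈ Finset.univ.erase m,
      (if (k:ℕ) < (m:ℕ) then (m:ℕ) - (k:ℕ) else (k:ℕ) - (m:ℕ))
    = ∏ n ∈ (Finset.range (d+1)).erase (m:ℕ),
      (if n < (m:ℕ) then (m:ℕ) - n else n - (m:ℕ)) := by
    rw [← hmap, Finset.prod_map]
    rfl
  rw [h1]
  have hsplit : (Finset.range (d+1)).erase (m:ℕ)
      = Finset.range (m:ℕ) ∪ Finset.Ico ((m:ℕ)+1) (d+1) := by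
    ext n
    simp only [Finset.mem_erase, Finset.mem_range, Finset.mem_union, Finset.mem_Ico]
    omega
  have hdisj : Disjoint (Finset.range (m:ℕ)) (Finset.Ico ((m:ℕ)+1) (d+1)) := by
    simp only [Finset.disjoint_left, Finset.mem_range, Finset.mem_Ico]
    omega
  rw [hsplit, Finset.prod_union hdisj]
  congr 1
  · have e1 : ∏ x ∈ Finset.range (m:ℕ), (if x < (m:ℕ) then (m:ℕ) - x else x - (m:ℕ))
        = ∏ x ∈ Finset.range (m:ℕ), ((m:ℕ) - x) :=
      Finset.prod_congr rfl (fun x hx => if_pos (Finset.mem_range.mp hx))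
    rw [e1, ← Finset.prod_range_reflect]
    have e2 : ∀ j ∈ Finset.range (m:ℕ), (m:ℕ) - ((m:ℕ) - 1 - j) = j + 1 := by
      intro j hj
      have := Finset.mem_range.mp hj
      omega
    rw [Finset.prod_congr rfl e2, Finset.prod_range_add_one_eq_factorial]
  · rw [Finset.prod_Ico_eq_prod_range]
    have e3 : ∀ j ∈ Finset.range (d + 1 - ((m:ℕ)+1)),
        (if (m:ℕ)+1+j < (m:ℕ) then (m:ℕ) - ((m:ℕ)+1+j) else (m:ℕ)+1+j - (m:ℕ)) = j + 1 := by
      intro j hj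
      rw [if_neg (by omega)]
      omega
    rw [Finset.prod_congr rfl e3, Finset.prod_range_add_one_eq_factorial]
    congr 1
    omega

lemma aux_gap {n : ℕ} {δ : ℝ} (y : Fin n → ℝ) (hmono : Monotone y)
    (hsep : ∀ i j : Fin n, i ≠ j → δ ≤ |y i - y j|) :
    ∀ k : ℕ, ∀ a b : Fin n, (b : ℕ) = (a : ℕ) + k → δ * k ≤ y b - y a := by
  intro k
  induction k with
  | zero =>
    intro a b hab
    have : a = b := Fin.ext (by omega)
    subst this
    simp
  | succ k ih =>
    intro a b hab
    have hc : (a : ℕ) + k < n := by omega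
    set c : Fin n := ⟨(a:ℕ) + k, hc⟩ with hcdef
    have h1 : δ * k ≤ y c - y a := ih a c rfl
    have hcb : c ≠ b := by
      intro h
      have := congrArg Fin.val h
      simp [hcdef] at this
      omega
    have hle : y c ≤ y b := hmono (by simp [Fin.le_def, hcdef]; omega)
    have h2 : δ ≤ y b - y c := by
      have := hsep c b hcb
      rw [abs_sub_comm, abs_of_nonneg (by linarith)] at this
      linarith
    push_cast
    linarith

/-- Discrete Remez inequality: extrapolation bound for a polynomial of degree at most `d`
from a `δ`-separated set of `d+1` points in `[0,1]` to a point `L ≥ 1`. -/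
theorem discrete_remez_extrapolation
    (d : ℕ) (hd : 1 ≤ d) (δ : ℝ) (hδ : 0 < δ)
    (x : Fin (d + 1) → ℝ) (hx : ∀ j, x j ∈ Set.Icc (0 : ℝ) 1)
    (hsep : ∀ i j, i ≠ j → δ ≤ |x i - x j|)
    (p : Polynomial ℝ) (hp : p.natDegree ≤ d)
    (L : ℝ) (hL : 1 ≤ L) :
    |p.eval L| ≤ (Real.exp 2 * (δ * d)⁻¹ * L) ^ d * ⨆ j, |p.eval (x j)| := by
  classical
  set M := ⨆ j, |p.eval (x j)| with hM
  have hL0 : (0:ℝ) < L := lt_of_lt_of_le one_pos hL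
  have hMb : BddAbove (Set.range fun j => |p.eval (x j)|) :=
    Set.Finite.bddAbove (Set.finite_range _)
  have hMj : ∀ j, |p.eval (x j)| ≤ M := fun j => le_ciSup hMb j
  have hM0 : 0 ≤ M := le_trans (abs_nonneg _) (hMj 0)
  have hxinj : Function.Injective x := by
    intro i j hij
    by_contra hne
    have h := hsep i j hne
    rw [hij, sub_self, abs_zero] at h
    linarith
  have hinj : Set.InjOn x ↑(Finset.univ : Finset (Fin (d+1))) := fun i _ j _ h => hxinj h
  have hdeg : p.degree < ((Finset.univ : Finset (Fin (d+1))).card : ℕ) := by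
    rw [Finset.card_univ, Fintype.card_fin]
    calc p.degree ≤ (p.natDegree : WithBot ℕ) := degree_le_natDegree
      _ < ((d+1 : ℕ) : WithBot ℕ) := by exact_mod_cast Nat.lt_succ_of_le hp
  have hinterp := Lagrange.eq_interpolate hinj hdeg
  have heval : p.eval L = ∑ i, p.eval (x i) * (Lagrange.basis Finset.univ x i).eval L := by
    conv_lhs => rw [hinterp]
    rw [Lagrange.interpolate_apply, Polynomial.eval_finset_sum]
    simp
  -- sorted version
  set σ := Tuple.sort x with hσ
  set y : Fin (d+1) → ℝ := x ∘ σ with hy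
  have hyv : ∀ k, y k = x (σ k) := fun _ => rfl
  have hymono : Monotone y := Tuple.monotone_sort x
  have hysep : ∀ i j : Fin (d+1), i ≠ j → δ ≤ |y i - y j| := fun i j hij =>
    hsep (σ i) (σ j) (fun h => hij (σ.injective h))
  have hgap := aux_gap y hymono hysep
  have hdist : ∀ m k : Fin (d+1), k ≠ m →
      δ * ((if (k:ℕ) < (m:ℕ) then (m:ℕ) - (k:ℕ) else (k:ℕ) - (m:ℕ) : ℕ) : ℝ) ≤ |y m - y k| := by
    intro m k hmk
    have hne : (k:ℕ) ≠ (m:ℕ) := fun h => hmk (Fin.ext h)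
    rcases lt_or_gt_of_ne hne with h | h
    · have hg := hgap ((m:ℕ) - (k:ℕ)) k m (by omega)
      have hnn : 0 ≤ y m - y k := le_trans (by positivity) hg
      rw [if_pos h, abs_of_nonneg hnn]
      exact hg
    · have hg := hgap ((k:ℕ) - (m:ℕ)) m k (by omega)
      have hnn : 0 ≤ y k - y m := le_trans (by positivity) hg
      rw [if_neg (by omega), abs_sub_comm, abs_of_nonneg hnn]
      exact hg
  -- the bound for each basis polynomial
  have hbasis : ∀ m : Fin (d+1),
      |(Lagrange.basis Finset.univ x (σ m)).eval L|
        ≤ L^d * (δ^d)⁻¹ * ((((m:ℕ).factorial * (d - (m:ℕ)).factorial : ℕ)) : ℝ)⁻¹ := by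
    intro m
    have hre : (Lagrange.basis Finset.univ x (σ m)).eval L
        = ∏ k ∈ Finset.univ.erase m, ((y m - y k)⁻¹ * (L - y k)) := by
      rw [Lagrange.basis, Polynomial.eval_prod]
      have hmapset : Finset.univ.erase (σ m) = (Finset.univ.erase m).map σ.toEmbedding := by
        rw [Finset.map_erase, Finset.map_univ_equiv]
        rfl
      rw [hmapset, Finset.prod_map]
      apply Finset.prod_congr rfl
      intro k hk
      simp [Lagrange.basisDivisor, hyv]
    rw [hre, Finset.abs_prod]
    have step : ∀ k ∈ Finset.univ.erase m,
        |(y m - y k)⁻¹ * (L - y k)|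
          ≤ (δ * ((if (k:ℕ) < (m:ℕ) then (m:ℕ) - (k:ℕ) else (k:ℕ) - (m:ℕ) : ℕ) : ℝ))⁻¹ * L := by
      intro k hk
      have hkm : k ≠ m := (Finset.mem_erase.mp hk).1
      have hd1 := hdist m k hkm
      have hcge : (1:ℕ) ≤ (if (k:ℕ) < (m:ℕ) then (m:ℕ) - (k:ℕ) else (k:ℕ) - (m:ℕ)) := by
        have : (k:ℕ) ≠ (m:ℕ) := fun h => hkm (Fin.ext h)
        split <;> omega
      have hcpos : (0:ℝ) < δ * ((if (k:ℕ) < (m:ℕ) then (m:ℕ) - (k:ℕ) else (k:ℕ) - (m:ℕ) : ℕ) : ℝ) := by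
        have : (1:ℝ) ≤ ((if (k:ℕ) < (m:ℕ) then (m:ℕ) - (k:ℕ) else (k:ℕ) - (m:ℕ) : ℕ) : ℝ) := by
          exact_mod_cast hcge
        nlinarith
      have hyk := hx (σ k)
      have hyk0 : 0 ≤ y k := hyk.1
      have hyk1 : y k ≤ 1 := hyk.2
      have hLy : |L - y k| ≤ L := by
        rw [abs_of_nonneg (by linarith)]
        linarith
      rw [abs_mul, abs_inv]
      apply mul_le_mul _ hLy (abs_nonneg _) (by positivity)
      exact inv_anti₀ hcpos hd1
    calc ∏ k ∈ Finset.univ.erase m, |(y m - y k)⁻¹ * (L - y k)|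
        ≤ ∏ k ∈ Finset.univ.erase m,
            ((δ * ((if (k:ℕ) < (m:ℕ) then (m:ℕ) - (k:ℕ) else (k:ℕ) - (m:ℕ) : ℕ) : ℝ))⁻¹ * L) :=
          Finset.prod_le_prod (fun k _ => abs_nonneg _) step
      _ = L^d * (δ^d)⁻¹ * ((((m:ℕ).factorial * (d - (m:ℕ)).factorial : ℕ)) : ℝ)⁻¹ := by
          have hcard : (Finset.univ.erase m).card = d := by
            rw [Finset.card_erase_of_mem (Finset.mem_univ m), Finset.card_univ, Fintype.card_fin]; omega
          have hval : ∏ k ∈ Finset.univ.erase m,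
              ((if (k:ℕ) < (m:ℕ) then (m:ℕ) - (k:ℕ) else (k:ℕ) - (m:ℕ) : ℕ) : ℝ)
              = ((((m:ℕ).factorial * (d - (m:ℕ)).factorial : ℕ)) : ℝ) := by
            rw [← Nat.cast_prod, aux_prod_dist d m]
          have e4 : ∏ k ∈ Finset.univ.erase m,
              (δ * ((if (k:ℕ) < (m:ℕ) then (m:ℕ) - (k:ℕ) else (k:ℕ) - (m:ℕ) : ℕ) : ℝ))
              = δ^d * ((((m:ℕ).factorial * (d - (m:ℕ)).factorial : ℕ)) : ℝ) := by
            rw [Finset.prod_mul_distrib, Finset.prod_const, hcard, hval]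
          rw [Finset.prod_mul_distrib, Finset.prod_const, hcard,
            Finset.prod_inv_distrib, e4, mul_inv]
          ring
  -- sum of the inverse factorial products
  have hsum : ∑ m : Fin (d+1), ((((m:ℕ).factorial * (d - (m:ℕ)).factorial : ℕ)) : ℝ)⁻¹
      = 2^d / (d.factorial : ℝ) := by
    have hterm : ∀ m : Fin (d+1),
        ((((m:ℕ).factorial * (d - (m:ℕ)).factorial : ℕ)) : ℝ)⁻¹
          = (d.choose (m:ℕ) : ℝ) / (d.factorial : ℝ) := by
      intro m
      have hm : (m:ℕ) ≤ d := Nat.lt_succ_iff.mp m.isLt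
      have hc := Nat.choose_mul_factorial_mul_factorial hm
      have hc' : ((d.choose (m:ℕ)) : ℝ) * ((m:ℕ).factorial : ℝ) * ((d - (m:ℕ)).factorial : ℝ)
          = (d.factorial : ℝ) := by exact_mod_cast congrArg (Nat.cast : ℕ → ℝ) hc
      have hf1 : (0:ℝ) < ((m:ℕ).factorial : ℝ) := by exact_mod_cast Nat.factorial_pos _
      have hf2 : (0:ℝ) < ((d - (m:ℕ)).factorial : ℝ) := by exact_mod_cast Nat.factorial_pos _
      have hf3 : (0:ℝ) < (d.factorial : ℝ) := by exact_mod_cast Nat.factorial_pos _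
      push_cast
      rw [eq_div_iff (ne_of_gt hf3), inv_mul_eq_div, div_eq_iff (by positivity)]
      linarith [hc']
    rw [Finset.sum_congr rfl (fun m _ => hterm m), ← Finset.sum_div]
    congr 1
    rw [Fin.sum_univ_eq_sum_range (fun i => (d.choose i : ℝ)), ← Nat.cast_sum,
      Nat.sum_range_choose]
    push_cast
    ring
  -- now the main chain
  have hfp : (0:ℝ) < (d.factorial : ℝ) := by exact_mod_cast Nat.factorial_pos d
  have hdp : (0:ℝ) < ((d:ℝ))^d := by
    have : (0:ℝ) < (d:ℝ) := by exact_mod_cast hd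
    positivity
  have h2e : (2:ℝ) ≤ Real.exp 1 := by nlinarith [Real.add_one_le_exp (1:ℝ)]
  have hdd : (2:ℝ)^d * (d:ℝ)^d ≤ (Real.exp 2)^d * (d.factorial : ℝ) := by
    have ha : (2:ℝ)^d ≤ Real.exp 1 ^ d := pow_le_pow_left₀ (by norm_num) h2e d
    have hb := aux_fact d
    have hexp2 : Real.exp 2 = Real.exp 1 * Real.exp 1 := by
      rw [← Real.exp_add]; norm_num
    calc (2:ℝ)^d * (d:ℝ)^d ≤ Real.exp 1 ^ d * (Real.exp 1 ^ d * (d.factorial : ℝ)) := by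
          apply mul_le_mul ha hb (by positivity) (by positivity)
      _ = (Real.exp 2)^d * (d.factorial : ℝ) := by rw [hexp2, mul_pow]; ring
  have hfinal : L^d * (δ^d)⁻¹ * (2^d / (d.factorial : ℝ))
      ≤ (Real.exp 2 * (δ * d)⁻¹ * L)^d := by
    have hkey : (2:ℝ)^d / (d.factorial : ℝ) ≤ (Real.exp 2)^d / (d:ℝ)^d := by
      rw [div_le_div_iff₀ hfp hdp]
      exact hdd
    calc L^d * (δ^d)⁻¹ * (2^d / (d.factorial : ℝ))
        ≤ L^d * (δ^d)⁻¹ * ((Real.exp 2)^d / (d:ℝ)^d) := by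
          apply mul_le_mul_of_nonneg_left hkey (by positivity)
      _ = (Real.exp 2 * (δ * d)⁻¹ * L)^d := by
          rw [mul_pow, mul_pow, inv_pow, mul_pow]
          field_simp
  calc |p.eval L| = |∑ i, p.eval (x i) * (Lagrange.basis Finset.univ x i).eval L| := by
        rw [heval]
    _ ≤ ∑ i, |p.eval (x i) * (Lagrange.basis Finset.univ x i).eval L| :=
        Finset.abs_sum_le_sum_abs _ _
    _ = ∑ i, |p.eval (x i)| * |(Lagrange.basis Finset.univ x i).eval L| := by
        simp [abs_mul]
    _ ≤ ∑ i, M * |(Lagrange.basis Finset.univ x i).eval L| :=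
        Finset.sum_le_sum (fun i _ => mul_le_mul_of_nonneg_right (hMj i) (abs_nonneg _))
    _ = M * ∑ i, |(Lagrange.basis Finset.univ x i).eval L| := by
        rw [Finset.mul_sum]
    _ = M * ∑ m : Fin (d+1), |(Lagrange.basis Finset.univ x (σ m)).eval L| := by
        congr 1
        exact (Equiv.sum_comp σ (fun i => |(Lagrange.basis Finset.univ x i).eval L|)).symm
    _ ≤ M * ∑ m : Fin (d+1), (L^d * (δ^d)⁻¹ * ((((m:ℕ).factorial * (d - (m:ℕ)).factorial : ℕ)) : ℝ)⁻¹) :=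
        mul_le_mul_of_nonneg_left (Finset.sum_le_sum fun m _ => hbasis m) hM0
    _ = M * (L^d * (δ^d)⁻¹ * (2^d / (d.factorial : ℝ))) := by
        rw [← Finset.mul_sum, hsum]
    _ ≤ M * (Real.exp 2 * (δ * d)⁻¹ * L)^d :=
        mul_le_mul_of_nonneg_left hfinal hM0
    _ = (Real.exp 2 * (δ * d)⁻¹ * L)^d * M := mul_comm _ _
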